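/- (Deterministic core of Proposition 1.) Let p̂_S, p̂_T, a_S, a_T, b_S, b_T ∈ [0,1], let p ∈ (0,1), and let ε ≥ 0, C ≥ 0. Define oer_S = p̂_S·a_S + (1 − p̂_S)·b_S, oer_T = p̂_T·a_T + (1 − p̂_T)·b_T, Δ_S = p̂_S·a_S − (1 − p̂_S)·b_S, and Δ_T = p̂_T·a_T − (1 − p̂_T)·b_T. Suppose (i) oer_T ≤ oer_S − ε, (ii) |p̂_S − p| ≤ C, (iii) |p̂_T − p| ≤ C, and (iv) |a_T − a_S| ≤ ε. Then −Δ_T ≤ −Δ_S + ε + 4C. -/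
import Mathlib


/-- Deterministic core of Proposition 1: with
`oer_S = p̂_S·a_S + (1 − p̂_S)·b_S`, `oer_T = p̂_T·a_T + (1 − p̂_T)·b_T`,
`Δ_S = p̂_S·a_S − (1 − p̂_S)·b_S`, `Δ_T = p̂_T·a_T − (1 − p̂_T)·b_T`,
if `oer_T ≤ oer_S − ε`, `|p̂_S − p| ≤ C`, `|p̂_T − p| ≤ C`, and `|a_T − a_S| ≤ ε`,
then `−Δ_T ≤ −Δ_S + ε + 4C`. -/
theorem gap_control
    (pS pT aS aT bS bT : ℝ)
    (hpS : pS ∈ Set.Icc (0 : ℝ) 1) (hpT : pT ∈ Set.Icc (0 : ℝ) 1)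
    (haS : aS ∈ Set.Icc (0 : ℝ) 1) (haT : aT ∈ Set.Icc (0 : ℝ) 1)
    (hbS : bS ∈ Set.Icc (0 : ℝ) 1) (hbT : bT ∈ Set.Icc (0 : ℝ) 1)
    (p : ℝ) (hp0 : 0 < p) (hp1 : p < 1)
    (ε C : ℝ) (hε : 0 ≤ ε) (hC : 0 ≤ C)
    (h1 : pT * aT + (1 - pT) * bT ≤ pS * aS + (1 - pS) * bS - ε)
    (h2 : |pS - p| ≤ C)
    (h3 : |pT - p| ≤ C)
    (h4 : |aT - aS| ≤ ε) :
    -(pT * aT - (1 - pT) * bT) ≤ -(pS * aS - (1 - pS) * bS) + ε + 4 * C := by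
  obtain ⟨ha2l,ha2r⟩ := abs_le.mp h2
  obtain ⟨ha3l,ha3r⟩ := abs_le.mp h3
  obtain ⟨ha4l,ha4r⟩ := abs_le.mp h4
  obtain ⟨h0S,h1S⟩ := hpS
  obtain ⟨h0T,h1T⟩ := hpT
  obtain ⟨h0a,h1a⟩ := haT
  nlinarith [mul_nonneg h0S (sub_nonneg.mpr ha4l), mul_le_one₀ h1S h0a h1a,
    mul_nonneg h0a hC, mul_nonneg (sub_nonneg.mpr h0a) hC,
    mul_le_of_le_one_left (by linarith : (0:ℝ) ≤ aS - aT + ε) h1S,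
    mul_le_of_le_one_right (by linarith : (0:ℝ) ≤ pS - pT + 2*C) h1a]
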